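/- Decomposition of normal forms: if x, x̃ are k-dimensional trees in normal form with x ≗ x̃ and common cell dimension cd := cd(x) = cd(x̃), then x = (x₀ → u_{cd+1} → ⋯ → u_k) and x̃ = (x̃₀ → u_{cd+1} → ⋯ → u_k), where x₀ and x̃₀ are in normal form, contain no u-labelled vertices, and x₀ ≗ x̃₀. -/

import Mathlib

namespace Sesq

/-- `(𝒪ₙ, X)`-labelled trees: leaves labelled by cells of `X`, internal vertices
labelled by unit generators `u_i` or composition/whiskering generators `∘_{i,j}`. -/
inductive PTree (X : Type) : Type
  | leaf : X → PTree X
  | unit : ℕ → PTree X → PTree X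
  | comp : ℕ → ℕ → PTree X → PTree X → PTree X

namespace PTree

variable {X Y : Type}

/-- Dimension of a labelled tree. -/
def dimT (dX : X → ℕ) : PTree X → ℕ
  | leaf c => dX c
  | unit i _ => i
  | comp i j _ _ => max i j

/-- Well-formedness: labels have the appropriate dimensions. -/
def WF (dX : X → ℕ) : PTree X → Prop
  | leaf _ => True
  | unit i x => WF dX x ∧ dimT dX x + 1 = i
  | comp i j x y => WF dX x ∧ WF dX y ∧ dimT dX x = i ∧ dimT dX y = j ∧ 1 ≤ i ∧ 1 ≤ j

/-- Relabelling the leaves of a tree. -/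
def mapTree (f : X → Y) : PTree X → PTree Y
  | leaf c => leaf (f c)
  | unit i x => unit i (mapTree f x)
  | comp i j x y => comp i j (mapTree f x) (mapTree f y)

/-- A tree contains no `u`-labelled vertices. -/
def UnitFree : PTree X → Prop
  | leaf _ => True
  | unit _ _ => False
  | comp _ _ x y => UnitFree x ∧ UnitFree y

/-- The ordered list of leaves of a tree (increasing for the canonical linear order:
every leaf of the left subtree of `∘_{i,j}` is greater than every leaf of the right one). -/
def leaves : PTree X → List X
  | leaf c => [c]
  | unit _ x => leaves x
  | comp _ _ x y => leaves y ++ leaves x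

/-- The cell dimension `cd(x)`: the maximum of the dimensions of the cells labelling leaves. -/
def cdim (dX : X → ℕ) (x : PTree X) : ℕ :=
  ((leaves x).map dX).foldr max 0

/-- The leaves of dimension at least `M`, in the canonical order. -/
def leavesGe (dX : X → ℕ) (M : ℕ) (x : PTree X) : List X :=
  (leaves x).filter fun c => M ≤ dX c

/-- `M(x) = max { j : x has at least two leaves of dimension ≥ j }`, with `M(x) = ⊥ = -∞`
if `x` has only one leaf. -/
def Mval (dX : X → ℕ) (x : PTree X) : WithBot ℕ :=
  (((List.range (cdim dX x + 1)).filter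
      fun j => 2 ≤ ((leaves x).filter fun c => j ≤ dX c).length).map
      (fun j => (j : WithBot ℕ))).foldr max ⊥

/-- The set of values `m(v) = min i j` over `∘_{i,j}`-labelled internal vertices. -/
def mset : PTree X → Finset ℕ
  | leaf _ => ∅
  | unit _ x => mset x
  | comp i j x y => insert (min i j) (mset x ∪ mset y)

/-- `H(x)`, the number of distinct values of `m(v)` over internal `∘`-vertices of `x`. -/
def Hval (x : PTree X) : ℕ := (mset x).card

/-- The reduction `r(x)`, deleting unit-generated subtrees; `none` plays the role of `∅`. -/
def reduce : PTree X → Option (PTree X)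
  | leaf c => some (leaf c)
  | unit _ _ => none
  | comp i j x y =>
    if i = j then
      match reduce x, reduce y with
      | none, r => r
      | r, none => r
      | some a, some b => some (comp i j a b)
    else if i < j then
      match reduce x, reduce y with
      | none, r => r
      | _, none => none
      | some a, some b => some (comp i j a b)
    else
      match reduce x, reduce y with
      | r, none => r
      | none, _ => none
      | some a, some b => some (comp i j a b)

/-- The slice `σ^M_ℓ(w)`, where the leaf `ℓ ∈ L_{≥M}(w)` is specified by its index
`idx` in the ordered list `leavesGe dX M w`. -/
def slice (dX : X → ℕ) (M : ℕ) : PTree X → ℕ → PTree X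
  | leaf c, _ => leaf c
  | unit i x, _ => unit i x
  | comp i j x y, idx =>
    if M ≤ min i j then
      if idx < (leavesGe dX M y).length then slice dX M y idx
      else slice dX M x (idx - (leavesGe dX M y).length)
    else if i < j then
      comp i (dimT dX (slice dX M y idx)) x (slice dX M y idx)
    else
      comp (dimT dX (slice dX M x idx)) j (slice dX M x idx) y

/-- Grafting the chain of units `u_{a+1} → ⋯ → u_b` on top of `t`. -/
def graftUnits (t : PTree X) (a : ℕ) : ℕ → PTree X
  | 0 => t
  | b + 1 => if a < b + 1 then unit (b + 1) (graftUnits t a b) else t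

/-- The root of `t` is not a unit vertex. -/
def notUnitRoot (t : PTree X) : Prop := ∀ i y, t ≠ unit i y

/-- If the root of `t` is a `∘`-vertex, then its `m`-value is `< m`. -/
def smallRoot (m : ℕ) (t : PTree X) : Prop :=
  ∀ a b u v, t = comp a b u v → min a b < m

/-- The labelled-subtree relation: `IsSubtree s t` iff `s` is the full subtree of `t`
above some vertex. -/
inductive IsSubtree : PTree X → PTree X → Prop
  | refl (t) : IsSubtree t t
  | unit (i x s) : IsSubtree s x → IsSubtree s (PTree.unit i x)
  | left (i j x y s) : IsSubtree s x → IsSubtree s (PTree.comp i j x y)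
  | right (i j x y s) : IsSubtree s y → IsSubtree s (PTree.comp i j x y)

end PTree

/-- A precomputad: a set of cells with dimensions and source/target trees. -/
structure Precomputad where
  cells : Type
  dim : cells → ℕ
  csrc : cells → PTree cells
  ctgt : cells → PTree cells

namespace Precomputad

variable (P : Precomputad)

/-- The source map on labelled trees. -/
def srcT : PTree P.cells → PTree P.cells
  | .leaf c => P.csrc c
  | .unit _ x => x
  | .comp i j x y =>
    if i = j then srcT y
    else if i < j then .comp i (j - 1) x (srcT y)
    else .comp (i - 1) j (srcT x) y

/-- The target map on labelled trees. -/
def tgtT : PTree P.cells → PTree P.cells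
  | .leaf c => P.ctgt c
  | .unit _ x => x
  | .comp i j x y =>
    if i = j then tgtT y
    else if i < j then .comp i (j - 1) x (tgtT y)
    else .comp (i - 1) j (tgtT x) y

/-- Iterated source. -/
def srcIter (k : ℕ) : PTree P.cells → PTree P.cells := P.srcT^[k]

/-- Iterated target. -/
def tgtIter (k : ℕ) : PTree P.cells → PTree P.cells := P.tgtT^[k]

end Precomputad

open PTree

mutual

/-- `≗`-compatibility of labelled trees. -/
inductive Compat (P : Precomputad) : PTree P.cells → Prop
  | leaf (c) : Compat P (.leaf c)
  | unit {i : ℕ} {x} : Compat P x → dimT P.dim x + 1 = i → Compat P (.unit i x)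
  | comp {i j : ℕ} {x y} : Compat P x → Compat P y →
      dimT P.dim x = i → dimT P.dim y = j → 1 ≤ min i j →
      Rel P (P.srcIter (i - min i j + 1) x) (P.tgtIter (j - min i j + 1) y) →
      Compat P (.comp i j x y)

/-- The equivalence relation `≗` on compatible trees, generated by the relations `ℰₙ`
(units, associativity and congruence). -/
inductive Rel (P : Precomputad) : PTree P.cells → PTree P.cells → Prop
  | refl {x} : Compat P x → Rel P x x
  | symm {x y} : Rel P x y → Rel P y x
  | trans {x y z} : Rel P x y → Rel P y z → Rel P x z
  | congr_unit {k x x'} : Rel P x x' → Rel P (.unit k x) (.unit k x')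
  | congr_comp {i j x x' y y'} : Rel P x x' → Rel P y y' →
      Compat P (.comp i j x y) → Compat P (.comp i j x' y') →
      Rel P (.comp i j x y) (.comp i j x' y')
  | lam_unit {i k x y} : i ≤ k → Compat P x → Compat P y →
      dimT P.dim x + 1 = i → dimT P.dim y = k →
      Rel P x (P.tgtIter (k - i + 1) y) →
      Rel P (.comp i k (.unit i x) y) y
  | rho_unit {k i x y} : i ≤ k → Compat P x → Compat P y →
      dimT P.dim x = k → dimT P.dim y + 1 = i →
      Rel P (P.srcIter (k - i + 1) x) y →
      Rel P (.comp k i x (.unit i y)) x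
  | rho_push {i k x y} : i < k → Compat P x → Compat P y →
      dimT P.dim x = i → dimT P.dim y + 1 = k →
      Rel P (P.srcT x) (P.tgtIter (k - i) y) →
      Rel P (.comp i k x (.unit k y)) (.unit k (.comp i (k - 1) x y))
  | lam_push {k i x y} : i < k → Compat P x → Compat P y →
      dimT P.dim x + 1 = k → dimT P.dim y = i →
      Rel P (P.srcIter (k - i) x) (P.tgtT y) →
      Rel P (.comp k i (.unit k x) y) (.unit k (.comp (k - 1) i x y))
  | assoc_kkk {k x y z} : Compat P x → Compat P y → Compat P z →
      dimT P.dim x = k → dimT P.dim y = k → dimT P.dim z = k →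
      Rel P (P.srcT x) (P.tgtT y) → Rel P (P.srcT y) (P.tgtT z) →
      Rel P (.comp k k (.comp k k x y) z) (.comp k k x (.comp k k y z))
  | assoc_iik {i k x y z} : i < k → Compat P x → Compat P y → Compat P z →
      dimT P.dim x = i → dimT P.dim y = i → dimT P.dim z = k →
      Rel P (P.srcT x) (P.tgtT y) → Rel P (P.srcT y) (P.tgtIter (k - i + 1) z) →
      Rel P (.comp i k (.comp i i x y) z) (.comp i k x (.comp i k y z))
  | assoc_iki {i k x y z} : i < k → Compat P x → Compat P y → Compat P z →
      dimT P.dim x = i → dimT P.dim y = k → dimT P.dim z = i →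
      Rel P (P.srcT x) (P.tgtIter (k - i + 1) y) → Rel P (P.srcIter (k - i + 1) y) (P.tgtT z) →
      Rel P (.comp k i (.comp i k x y) z) (.comp i k x (.comp k i y z))
  | assoc_kii {i k x y z} : i < k → Compat P x → Compat P y → Compat P z →
      dimT P.dim x = k → dimT P.dim y = i → dimT P.dim z = i →
      Rel P (P.srcIter (k - i + 1) x) (P.tgtT y) → Rel P (P.srcT y) (P.tgtT z) →
      Rel P (.comp k i (.comp k i x y) z) (.comp k i x (.comp i i y z))
  | assoc_ikk {i k x y z} : i < k → Compat P x → Compat P y → Compat P z →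
      dimT P.dim x = i → dimT P.dim y = k → dimT P.dim z = k →
      Rel P (P.srcT x) (P.tgtIter (k - i + 1) y) → Rel P (P.srcT y) (P.tgtT z) →
      Rel P (.comp i k x (.comp k k y z)) (.comp k k (.comp i k x y) (.comp i k x z))
  | assoc_kki {i k x y z} : i < k → Compat P x → Compat P y → Compat P z →
      dimT P.dim x = k → dimT P.dim y = k → dimT P.dim z = i →
      Rel P (P.srcT x) (P.tgtT y) → Rel P (P.srcIter (k - i + 1) y) (P.tgtT z) →
      Rel P (.comp k i (.comp k k x y) z) (.comp k k (.comp k i x z) (.comp k i y z))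
  | assoc_ijk {i j k x y z} : i < j → j < k → Compat P x → Compat P y → Compat P z →
      dimT P.dim x = i → dimT P.dim y = j → dimT P.dim z = k →
      Rel P (P.srcT x) (P.tgtIter (j - i + 1) y) → Rel P (P.srcT y) (P.tgtIter (k - j + 1) z) →
      Rel P (.comp i k x (.comp j k y z)) (.comp j k (.comp i j x y) (.comp i k x z))
  | assoc_ikj {i j k x y z} : i < j → j < k → Compat P x → Compat P y → Compat P z →
      dimT P.dim x = i → dimT P.dim y = k → dimT P.dim z = j →
      Rel P (P.srcT x) (P.tgtIter (k - i + 1) y) → Rel P (P.srcIter (k - j + 1) y) (P.tgtT z) →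
      Rel P (.comp i k x (.comp k j y z)) (.comp k j (.comp i k x y) (.comp i j x z))
  | assoc_jki {i j k x y z} : i < j → j < k → Compat P x → Compat P y → Compat P z →
      dimT P.dim x = j → dimT P.dim y = k → dimT P.dim z = i →
      Rel P (P.srcT x) (P.tgtIter (k - j + 1) y) → Rel P (P.srcIter (k - i + 1) y) (P.tgtT z) →
      Rel P (.comp k i (.comp j k x y) z) (.comp j k (.comp j i x z) (.comp k i y z))
  | assoc_kji {i j k x y z} : i < j → j < k → Compat P x → Compat P y → Compat P z →
      dimT P.dim x = k → dimT P.dim y = j → dimT P.dim z = i →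
      Rel P (P.srcIter (k - j + 1) x) (P.tgtT y) → Rel P (P.srcIter (j - i + 1) y) (P.tgtT z) →
      Rel P (.comp k i (.comp k j x y) z) (.comp k j (.comp k i x z) (.comp j i y z))

end

mutual

/-- `≗°`-compatibility: compatibility with respect to the unit-free relations only. -/
inductive CompatO (P : Precomputad) : PTree P.cells → Prop
  | leaf (c) : CompatO P (.leaf c)
  | unit {i : ℕ} {x} : CompatO P x → dimT P.dim x + 1 = i → CompatO P (.unit i x)
  | comp {i j : ℕ} {x y} : CompatO P x → CompatO P y →
      dimT P.dim x = i → dimT P.dim y = j → 1 ≤ min i j →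
      RelO P (P.srcIter (i - min i j + 1) x) (P.tgtIter (j - min i j + 1) y) →
      CompatO P (.comp i j x y)

/-- The unit-free equivalence `≗°`, generated by the relations of `ℰₙ` not involving units. -/
inductive RelO (P : Precomputad) : PTree P.cells → PTree P.cells → Prop
  | refl {x} : CompatO P x → RelO P x x
  | symm {x y} : RelO P x y → RelO P y x
  | trans {x y z} : RelO P x y → RelO P y z → RelO P x z
  | congr_comp {i j x x' y y'} : RelO P x x' → RelO P y y' →
      CompatO P (.comp i j x y) → CompatO P (.comp i j x' y') →
      RelO P (.comp i j x y) (.comp i j x' y')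
  | assoc_kkk {k x y z} : CompatO P x → CompatO P y → CompatO P z →
      dimT P.dim x = k → dimT P.dim y = k → dimT P.dim z = k →
      RelO P (P.srcT x) (P.tgtT y) → RelO P (P.srcT y) (P.tgtT z) →
      RelO P (.comp k k (.comp k k x y) z) (.comp k k x (.comp k k y z))
  | assoc_iik {i k x y z} : i < k → CompatO P x → CompatO P y → CompatO P z →
      dimT P.dim x = i → dimT P.dim y = i → dimT P.dim z = k →
      RelO P (P.srcT x) (P.tgtT y) → RelO P (P.srcT y) (P.tgtIter (k - i + 1) z) →
      RelO P (.comp i k (.comp i i x y) z) (.comp i k x (.comp i k y z))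
  | assoc_iki {i k x y z} : i < k → CompatO P x → CompatO P y → CompatO P z →
      dimT P.dim x = i → dimT P.dim y = k → dimT P.dim z = i →
      RelO P (P.srcT x) (P.tgtIter (k - i + 1) y) → RelO P (P.srcIter (k - i + 1) y) (P.tgtT z) →
      RelO P (.comp k i (.comp i k x y) z) (.comp i k x (.comp k i y z))
  | assoc_kii {i k x y z} : i < k → CompatO P x → CompatO P y → CompatO P z →
      dimT P.dim x = k → dimT P.dim y = i → dimT P.dim z = i →
      RelO P (P.srcIter (k - i + 1) x) (P.tgtT y) → RelO P (P.srcT y) (P.tgtT z) →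
      RelO P (.comp k i (.comp k i x y) z) (.comp k i x (.comp i i y z))
  | assoc_ikk {i k x y z} : i < k → CompatO P x → CompatO P y → CompatO P z →
      dimT P.dim x = i → dimT P.dim y = k → dimT P.dim z = k →
      RelO P (P.srcT x) (P.tgtIter (k - i + 1) y) → RelO P (P.srcT y) (P.tgtT z) →
      RelO P (.comp i k x (.comp k k y z)) (.comp k k (.comp i k x y) (.comp i k x z))
  | assoc_kki {i k x y z} : i < k → CompatO P x → CompatO P y → CompatO P z →
      dimT P.dim x = k → dimT P.dim y = k → dimT P.dim z = i →
      RelO P (P.srcT x) (P.tgtT y) → RelO P (P.srcIter (k - i + 1) y) (P.tgtT z) →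
      RelO P (.comp k i (.comp k k x y) z) (.comp k k (.comp k i x z) (.comp k i y z))
  | assoc_ijk {i j k x y z} : i < j → j < k → CompatO P x → CompatO P y → CompatO P z →
      dimT P.dim x = i → dimT P.dim y = j → dimT P.dim z = k →
      RelO P (P.srcT x) (P.tgtIter (j - i + 1) y) → RelO P (P.srcT y) (P.tgtIter (k - j + 1) z) →
      RelO P (.comp i k x (.comp j k y z)) (.comp j k (.comp i j x y) (.comp i k x z))
  | assoc_ikj {i j k x y z} : i < j → j < k → CompatO P x → CompatO P y → CompatO P z →
      dimT P.dim x = i → dimT P.dim y = k → dimT P.dim z = j →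
      RelO P (P.srcT x) (P.tgtIter (k - i + 1) y) → RelO P (P.srcIter (k - j + 1) y) (P.tgtT z) →
      RelO P (.comp i k x (.comp k j y z)) (.comp k j (.comp i k x y) (.comp i j x z))
  | assoc_jki {i j k x y z} : i < j → j < k → CompatO P x → CompatO P y → CompatO P z →
      dimT P.dim x = j → dimT P.dim y = k → dimT P.dim z = i →
      RelO P (P.srcT x) (P.tgtIter (k - j + 1) y) → RelO P (P.srcIter (k - i + 1) y) (P.tgtT z) →
      RelO P (.comp k i (.comp j k x y) z) (.comp j k (.comp j i x z) (.comp k i y z))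
  | assoc_kji {i j k x y z} : i < j → j < k → CompatO P x → CompatO P y → CompatO P z →
      dimT P.dim x = k → dimT P.dim y = j → dimT P.dim z = i →
      RelO P (P.srcIter (k - j + 1) x) (P.tgtT y) → RelO P (P.srcIter (j - i + 1) y) (P.tgtT z) →
      RelO P (.comp k i (.comp k j x y) z) (.comp k j (.comp k i x z) (.comp j i y z))

end

mutual

/-- Trees in normal form: `m`-ordered, no edge `u → ∘`, and every `m`-constant
component in one of the two prescribed chain shapes. -/
inductive NF {X : Type} : PTree X → Prop
  | leaf (c : X) : NF (.leaf c)
  | unit (i : ℕ) (x : PTree X) : NF x → NF (.unit i x)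
  | compEq (k : ℕ) (x y : PTree X) : NF x → notUnitRoot x → smallRoot k x →
      ChainKK k y → NF (.comp k k x y)
  | compLt (i k : ℕ) (x y : PTree X) : i < k → NF x → notUnitRoot x → smallRoot i x →
      ChainA i k y → NF (.comp i k x y)
  | compGt (i k : ℕ) (x y : PTree X) : i < k → ChainB i k x → NF y → notUnitRoot y →
      smallRoot i y → NF (.comp k i x y)

/-- Continuation of an `m`-constant `∘_{k,k}`-chain in normal form. -/
inductive ChainKK {X : Type} : ℕ → PTree X → Prop
  | cons (k : ℕ) (x y : PTree X) : NF x → notUnitRoot x → smallRoot k x →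
      ChainKK k y → ChainKK k (.comp k k x y)
  | base (k : ℕ) (t : PTree X) : NF t → notUnitRoot t → smallRoot k t → ChainKK k t

/-- Continuation of the `∘_{i,k}`-phase of a mixed `m`-constant chain in normal form. -/
inductive ChainA {X : Type} : ℕ → ℕ → PTree X → Prop
  | cons (i k : ℕ) (x y : PTree X) : NF x → notUnitRoot x → smallRoot i x →
      ChainA i k y → ChainA i k (.comp i k x y)
  | toB (i k : ℕ) (t : PTree X) : ChainB i k t → ChainA i k t

/-- Continuation of the `∘_{k,i}`-phase of a mixed `m`-constant chain in normal form. -/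
inductive ChainB {X : Type} : ℕ → ℕ → PTree X → Prop
  | cons (i k : ℕ) (x y : PTree X) : ChainB i k x → NF y → notUnitRoot y →
      smallRoot i y → ChainB i k (.comp k i x y)
  | base (i k : ℕ) (t : PTree X) : NF t → notUnitRoot t → smallRoot i t → ChainB i k t

end

/-- A computad for the `n`-sesquicategory monad: cells of dimension `≤ n+1` with
compatible source/target trees satisfying the globularity relations up to `≗`. -/
structure Computad (n : ℕ) extends Precomputad where
  dim_le : ∀ c, dim c ≤ n + 1
  src_wf : ∀ c, 1 ≤ dim c → WF dim (csrc c)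
  tgt_wf : ∀ c, 1 ≤ dim c → WF dim (ctgt c)
  src_dim : ∀ c, 1 ≤ dim c → dimT dim (csrc c) + 1 = dim c
  tgt_dim : ∀ c, 1 ≤ dim c → dimT dim (ctgt c) + 1 = dim c
  src_compat : ∀ c, 1 ≤ dim c → Compat toPrecomputad (csrc c)
  tgt_compat : ∀ c, 1 ≤ dim c → Compat toPrecomputad (ctgt c)
  glob_s : ∀ c, 2 ≤ dim c →
    Rel toPrecomputad (toPrecomputad.srcT (csrc c)) (toPrecomputad.srcT (ctgt c))
  glob_t : ∀ c, 2 ≤ dim c →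
    Rel toPrecomputad (toPrecomputad.tgtT (csrc c)) (toPrecomputad.tgtT (ctgt c))

/-- A map of computads: a dimension-preserving map of cells commuting with
source and target up to `≗`. -/
structure CompHom {n : ℕ} (C D : Computad n) where
  f : C.cells → D.cells
  dim_eq : ∀ c, D.dim (f c) = C.dim c
  src_ok : ∀ c, 1 ≤ C.dim c →
    Rel D.toPrecomputad (D.csrc (f c)) (mapTree f (C.csrc c))
  tgt_ok : ∀ c, 1 ≤ C.dim c →
    Rel D.toPrecomputad (D.ctgt (f c)) (mapTree f (C.ctgt c))

end Sesq

namespace Sesq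

namespace PTree

/-- Strip the chain of top unit vertices from a tree. -/
def stripUnits {X : Type} : PTree X → PTree X
  | unit _ y => stripUnits y
  | leaf c => leaf c
  | comp i j a b => comp i j a b

@[simp] theorem stripUnits_unit {X : Type} (i : ℕ) (a : PTree X) :
    stripUnits (unit i a) = stripUnits a := rfl

@[simp] theorem stripUnits_leaf {X : Type} (c : X) : stripUnits (leaf c) = leaf c := rfl

@[simp] theorem stripUnits_comp {X : Type} (i j : ℕ) (a b : PTree X) :
    stripUnits (comp i j a b) = comp i j a b := rfl

theorem graftUnits_of_le {X : Type} (t : PTree X) {m k : ℕ} (h : k ≤ m) :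
    graftUnits t m k = t := by
  cases k with
  | zero => rfl
  | succ b => simp [graftUnits, Nat.not_lt.mpr h]

theorem foldr_max_init (l : List ℕ) (c : ℕ) : l.foldr max c = max (l.foldr max 0) c := by
  induction l with
  | nil => simp
  | cons a l ih =>
      simp only [List.foldr_cons, ih]
      exact (Nat.max_assoc _ _ _).symm

theorem cdim_comp {X : Type} (dX : X → ℕ) (i j : ℕ) (a b : PTree X) :
    cdim dX (comp i j a b) = max (cdim dX b) (cdim dX a) := by
  show ((leaves b ++ leaves a).map dX).foldr max 0 = _
  rw [List.map_append, List.foldr_append, foldr_max_init]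
  rfl

@[simp] theorem cdim_unit {X : Type} (dX : X → ℕ) (i : ℕ) (a : PTree X) :
    cdim dX (unit i a) = cdim dX a := rfl

@[simp] theorem cdim_leaf {X : Type} (dX : X → ℕ) (c : X) : cdim dX (leaf c) = dX c := by
  simp [cdim, leaves]

end PTree

open PTree

variable {P : Precomputad}

theorem compat_unit_inv {i : ℕ} {a : PTree P.cells} (h : Compat P (.unit i a)) :
    Compat P a ∧ dimT P.dim a + 1 = i := by
  cases h with
  | unit h hd => exact ⟨h, hd⟩

theorem compat_comp_inv {i j : ℕ} {a b : PTree P.cells} (h : Compat P (.comp i j a b)) :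
    Compat P a ∧ Compat P b ∧ dimT P.dim a = i ∧ dimT P.dim b = j := by
  cases h with
  | comp ha hb hda hdb _ _ => exact ⟨ha, hb, hda, hdb⟩

theorem nf_unit_inv {X : Type} {i : ℕ} {a : PTree X} (h : NF (.unit i a)) : NF a := by
  cases h with
  | unit _ _ h => exact h

theorem cdim_le_dimT : ∀ {x : PTree P.cells}, Compat P x → cdim P.dim x ≤ dimT P.dim x := by
  intro x
  induction x with
  | leaf c => intro _; simp [dimT]
  | unit i a ih =>
      intro h
      obtain ⟨ha, hd⟩ := compat_unit_inv h
      have := ih ha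
      simp only [cdim_unit, dimT]
      omega
  | comp i j a b iha ihb =>
      intro h
      obtain ⟨ha, hb, hda, hdb⟩ := compat_comp_inv h
      have h1 := iha ha
      have h2 := ihb hb
      simp only [cdim_comp, dimT]
      omega

theorem nf_unitFree {X : Type} : ∀ (x : PTree X),
    (NF x → notUnitRoot x → UnitFree x) ∧ (∀ k, ChainKK k x → UnitFree x) ∧
    (∀ i k, ChainA i k x → UnitFree x) ∧ (∀ i k, ChainB i k x → UnitFree x) := by
  intro x
  induction x with
  | leaf c => exact ⟨fun _ _ => trivial, fun _ _ => trivial, fun _ _ _ => trivial,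
      fun _ _ _ => trivial⟩
  | unit i a ih =>
      refine ⟨fun _ hnu => absurd rfl (hnu i a), fun k h => ?_, fun i' k h => ?_,
        fun i' k h => ?_⟩
      · cases h with
        | base _ _ _ hnu _ => exact absurd rfl (hnu i a)
      · cases h with
        | toB _ _ _ hb =>
            cases hb with
            | base _ _ _ _ hnu _ => exact absurd rfl (hnu i a)
      · cases h with
        | base _ _ _ _ hnu _ => exact absurd rfl (hnu i a)
  | comp i j a b iha ihb =>
      have hP : NF (comp i j a b) → notUnitRoot (comp i j a b) → UnitFree (comp i j a b) := by
        intro h _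
        cases h with
        | compEq k x y hx hnu hsr hch => exact ⟨iha.1 hx hnu, ihb.2.1 _ hch⟩
        | compLt i' k x y hik hx hnu hsr hch => exact ⟨iha.1 hx hnu, ihb.2.2.1 _ _ hch⟩
        | compGt i' k x y hik hch hy hnu hsr => exact ⟨iha.2.2.2 _ _ hch, ihb.1 hy hnu⟩
      have hB : ∀ i' k, ChainB i' k (comp i j a b) → UnitFree (comp i j a b) := by
        intro i' k h
        cases h with
        | cons _ _ x y hxb hy hnu hsr => exact ⟨iha.2.2.2 _ _ hxb, ihb.1 hy hnu⟩
        | base _ _ _ hnf hnu hsr => exact hP hnf hnu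
      have hKK : ∀ k, ChainKK k (comp i j a b) → UnitFree (comp i j a b) := by
        intro k h
        cases h with
        | cons _ x y hx hnu hsr hch => exact ⟨iha.1 hx hnu, ihb.2.1 _ hch⟩
        | base _ _ hnf hnu hsr => exact hP hnf hnu
      have hA : ∀ i' k, ChainA i' k (comp i j a b) → UnitFree (comp i j a b) := by
        intro i' k h
        cases h with
        | cons _ _ x y hx hnu hsr hch => exact ⟨iha.1 hx hnu, ihb.2.2.1 _ _ hch⟩
        | toB _ _ _ hb => exact hB _ _ hb
      exact ⟨hP, hKK, hA, hB⟩

theorem dimT_eq_cdim_of_unitFree :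
    ∀ {x : PTree P.cells}, Compat P x → UnitFree x → dimT P.dim x = cdim P.dim x := by
  intro x
  induction x with
  | leaf c => intro _ _; simp [dimT]
  | unit i a ih => intro _ hf; exact absurd hf (by simp [UnitFree])
  | comp i j a b iha ihb =>
      intro hc hf
      obtain ⟨ha, hb, hda, hdb⟩ := compat_comp_inv hc
      have h1 := iha ha hf.1
      have h2 := ihb hb hf.2
      simp only [cdim_comp, dimT]
      omega

theorem notUnitRoot_comp {X : Type} (i j : ℕ) (a b : PTree X) :
    notUnitRoot (PTree.comp i j a b) := by
  intro i' y' h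
  cases h

theorem notUnitRoot_leaf {X : Type} (c : X) : notUnitRoot (PTree.leaf c) := by
  intro i' y' h
  cases h

/-- Structure of normal forms: every compatible normal form is the grafting of
units on top of its unit-free core. -/
theorem nf_decomp :
    ∀ (x : PTree P.cells), NF x → Compat P x →
      x = graftUnits (stripUnits x) (cdim P.dim x) (dimT P.dim x) ∧
      NF (stripUnits x) ∧ UnitFree (stripUnits x) ∧ Compat P (stripUnits x) ∧
      cdim P.dim (stripUnits x) = cdim P.dim x := by
  intro x
  induction x with
  | leaf c =>
      intro hn hc
      refine ⟨?_, hn, trivial, hc, rfl⟩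
      rw [graftUnits_of_le]
      · rfl
      · simp [dimT]
  | unit i a ih =>
      intro hn hc
      obtain ⟨hca, hd⟩ := compat_unit_inv hc
      obtain ⟨he, hn', hf', hc', hcd'⟩ := ih (nf_unit_inv hn) hca
      have hle : cdim P.dim a ≤ dimT P.dim a := cdim_le_dimT hca
      refine ⟨?_, hn', hf', hc', hcd'⟩
      have hi : i = dimT P.dim a + 1 := hd.symm
      subst hi
      show PTree.unit (dimT P.dim a + 1) a =
        graftUnits (stripUnits a) (cdim P.dim a) (dimT P.dim a + 1)
      have key : graftUnits (stripUnits a) (cdim P.dim a) (dimT P.dim a + 1)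
          = PTree.unit (dimT P.dim a + 1)
              (graftUnits (stripUnits a) (cdim P.dim a) (dimT P.dim a)) := by
        simp only [graftUnits]
        rw [if_pos (by omega)]
      rw [key]
      exact congrArg _ he
  | comp i j a b iha ihb =>
      intro hn hc
      have hf : UnitFree (PTree.comp i j a b) :=
        (nf_unitFree _).1 hn (notUnitRoot_comp i j a b)
      refine ⟨?_, hn, hf, hc, rfl⟩
      rw [stripUnits_comp,
        graftUnits_of_le _ (Nat.le_of_eq (dimT_eq_cdim_of_unitFree hc hf))]

end Sesq

namespace Sesq

namespace PTree

/-- Partial core extraction: strips the unit vertex found at the end of the spine of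
maximal-dimension arguments, if there is one. -/
def pcore {X : Type} : PTree X → Option (PTree X)
  | .leaf _ => none
  | .unit _ z => some z
  | .comp i j u w =>
    if i = j then
      match pcore u, pcore w with
      | some _, some w₀ => some w₀
      | _, _ => none
    else if i < j then
      match pcore w with
      | some w₀ => some (.comp i (j-1) u w₀)
      | none => none
    else
      match pcore u with
      | some u₀ => some (.comp (i-1) j u₀ w)
      | none => none

@[simp] theorem pcore_leaf {X : Type} (c : X) : pcore (leaf c) = none := rfl

@[simp] theorem pcore_unit {X : Type} (i : ℕ) (z : PTree X) : pcore (unit i z) = some z := rfl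

theorem pcore_comp_eq {X : Type} (i : ℕ) (u w : PTree X) :
    pcore (comp i i u w) = if (pcore u).isSome then pcore w else none := by
  rw [pcore]
  simp only [if_pos rfl]
  cases pcore u <;> cases hw : pcore w <;> simp [Option.isSome]

theorem pcore_comp_lt {X : Type} {i j : ℕ} (h : i < j) (u w : PTree X) :
    pcore (comp i j u w) = (pcore w).map (fun w₀ => comp i (j-1) u w₀) := by
  rw [pcore]
  rw [if_neg (Nat.ne_of_lt h), if_pos h]
  cases pcore w <;> rfl

theorem pcore_comp_gt {X : Type} {i j : ℕ} (h : j < i) (u w : PTree X) :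
    pcore (comp i j u w) = (pcore u).map (fun u₀ => comp (i-1) j u₀ w) := by
  rw [pcore]
  rw [if_neg (Nat.ne_of_lt h).symm, if_neg (by omega)]
  cases pcore u <;> rfl

end PTree

open PTree

variable {P : Precomputad}

/-- On trees with a defined core, both source and target literally strip the core unit. -/
theorem pcore_src_tgt :
    ∀ {y y₀ : PTree P.cells}, pcore y = some y₀ → P.srcT y = y₀ ∧ P.tgtT y = y₀ := by
  intro y
  induction y with
  | leaf c => intro y₀ h; simp at h
  | unit i z ih =>
      intro y₀ h
      simp only [pcore_unit, Option.some_inj] at h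
      subst h
      exact ⟨rfl, rfl⟩
  | comp i j u w ihu ihw =>
      intro y₀ h
      rcases lt_trichotomy i j with hij | hij | hij
      · rw [pcore_comp_lt hij] at h
        rcases hw : pcore w with _ | w₀
        · rw [hw] at h; simp at h
        · rw [hw] at h
          simp only [Option.map_some, Option.some_inj] at h
          subst h
          constructor
          · show P.srcT (.comp i j u w) = _
            rw [Precomputad.srcT, if_neg (Nat.ne_of_lt hij), if_pos hij, (ihw hw).1]
          · show P.tgtT (.comp i j u w) = _
            rw [Precomputad.tgtT, if_neg (Nat.ne_of_lt hij), if_pos hij, (ihw hw).2]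
      · subst hij
        rw [pcore_comp_eq] at h
        by_cases hu : (pcore u).isSome
        · rw [if_pos hu] at h
          constructor
          · show P.srcT (.comp i i u w) = _
            rw [Precomputad.srcT, if_pos rfl, (ihw h).1]
          · show P.tgtT (.comp i i u w) = _
            rw [Precomputad.tgtT, if_pos rfl, (ihw h).2]
        · rw [if_neg hu] at h; simp at h
      · rw [pcore_comp_gt hij] at h
        rcases hu : pcore u with _ | u₀
        · rw [hu] at h; simp at h
        · rw [hu] at h
          simp only [Option.map_some, Option.some_inj] at h
          subst h
          constructor
          · show P.srcT (.comp i j u w) = _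
            rw [Precomputad.srcT, if_neg (by omega : ¬ i = j), if_neg (by omega), (ihu hu).1]
          · show P.tgtT (.comp i j u w) = _
            rw [Precomputad.tgtT, if_neg (by omega : ¬ i = j), if_neg (by omega), (ihu hu).2]

theorem pcore_tgtIter {q : ℕ} {y y₀ : PTree P.cells} (h : pcore y = some y₀) :
    P.tgtIter (q + 1) y = P.tgtIter q y₀ := by
  show P.tgtT^[q + 1] y = P.tgtT^[q] y₀
  rw [Function.iterate_succ_apply, (pcore_src_tgt h).2]

theorem pcore_srcIter {q : ℕ} {y y₀ : PTree P.cells} (h : pcore y = some y₀) :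
    P.srcIter (q + 1) y = P.srcIter q y₀ := by
  show P.srcT^[q + 1] y = P.srcT^[q] y₀
  rw [Function.iterate_succ_apply, (pcore_src_tgt h).1]

theorem compat_comp_inv' {i j : ℕ} {a b : PTree P.cells} (h : Compat P (.comp i j a b)) :
    Compat P a ∧ Compat P b ∧ dimT P.dim a = i ∧ dimT P.dim b = j ∧ 1 ≤ min i j ∧
      Rel P (P.srcIter (i - min i j + 1) a) (P.tgtIter (j - min i j + 1) b) := by
  cases h with
  | comp h1 h2 h3 h4 h5 h6 => exact ⟨h1, h2, h3, h4, h5, h6⟩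

/-- Compatibility passes to cores, and the dimension drops by one. -/
theorem pcore_compat :
    ∀ {y y₀ : PTree P.cells}, Compat P y → pcore y = some y₀ →
      Compat P y₀ ∧ dimT P.dim y₀ + 1 = dimT P.dim y := by
  intro y
  induction y with
  | leaf c => intro y₀ _ h; simp at h
  | unit i z ih =>
      intro y₀ hc h
      simp only [pcore_unit, Option.some_inj] at h
      subst h
      obtain ⟨h1, h2⟩ := compat_unit_inv hc
      exact ⟨h1, h2⟩
  | comp i j u w ihu ihw =>
      intro y₀ hc h
      obtain ⟨hcu, hcw, hdu, hdw, hmin, hfield⟩ := compat_comp_inv' hc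
      rcases lt_trichotomy i j with hij | hij | hij
      · rw [pcore_comp_lt hij] at h
        rcases hw : pcore w with _ | w₀
        · rw [hw] at h; simp at h
        · rw [hw] at h
          simp only [Option.map_some, Option.some_inj] at h
          subst h
          obtain ⟨hcw₀, hdw₀⟩ := ihw hcw hw
          have hfield' : Rel P (P.srcIter (i - min i (j-1) + 1) u)
              (P.tgtIter ((j-1) - min i (j-1) + 1) w₀) := by
            have e1 : i - min i (j-1) + 1 = i - min i j + 1 := by omega
            have e2 : j - min i j + 1 = ((j-1) - min i (j-1) + 1) + 1 := by omega
            rw [e2] at hfield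
            rw [pcore_tgtIter hw] at hfield
            rw [e1]
            exact hfield
          refine ⟨Compat.comp hcu hcw₀ hdu (by omega) (by omega) hfield', ?_⟩
          show max i (j-1) + 1 = max i j
          omega
      · subst hij
        rw [pcore_comp_eq] at h
        by_cases hu : (pcore u).isSome
        · rw [if_pos hu] at h
          obtain ⟨h1, h2⟩ := ihw hcw h
          exact ⟨h1, by show _ = max i i; omega⟩
        · rw [if_neg hu] at h; simp at h
      · rw [pcore_comp_gt hij] at h
        rcases hu : pcore u with _ | u₀
        · rw [hu] at h; simp at h
        · rw [hu] at h
          simp only [Option.map_some, Option.some_inj] at h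
          subst h
          obtain ⟨hcu₀, hdu₀⟩ := ihu hcu hu
          have hfield' : Rel P (P.srcIter ((i-1) - min (i-1) j + 1) u₀)
              (P.tgtIter (j - min (i-1) j + 1) w) := by
            have e1 : j - min (i-1) j + 1 = j - min i j + 1 := by omega
            have e2 : i - min i j + 1 = ((i-1) - min (i-1) j + 1) + 1 := by omega
            rw [e2] at hfield
            rw [pcore_srcIter hu] at hfield
            rw [e1]
            exact hfield
          refine ⟨Compat.comp hcu₀ hcw (by omega) hdw (by omega) hfield', ?_⟩
          show max (i-1) j + 1 = max i j
          omega

end Sesq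

namespace Sesq

open PTree

variable {P : Precomputad}

theorem isSome_map' {α β : Type} (f : α → β) (o : Option α) :
    (o.map f).isSome = o.isSome := by cases o <;> rfl

theorem isSome_guard {α : Type} (c : Bool) (o : Option α) :
    (if c then o else none).isSome ↔ (c ∧ o.isSome) := by cases c <;> simp

theorem srcIter_one (t : PTree P.cells) : P.srcIter 1 t = P.srcT t := rfl

theorem tgtIter_one (t : PTree P.cells) : P.tgtIter 1 t = P.tgtT t := rfl

/-- The invariant: definedness of `pcore` and the `≗`-class of its value are preserved. -/
def Mot (P : Precomputad) (z z' : PTree P.cells) : Prop :=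
  ((pcore z).isSome ↔ (pcore z').isSome) ∧
    ∀ a b, pcore z = some a → pcore z' = some b → (Rel P a b ∨ a = b)

theorem mot_of_eq {z z' : PTree P.cells} (h : pcore z = pcore z') : Mot P z z' := by
  refine ⟨by rw [h], fun a b ha hb => Or.inr ?_⟩
  rw [h, hb] at ha
  exact (Option.some_inj.mp ha).symm

theorem mot_symm {z z' : PTree P.cells} (h : Mot P z z') : Mot P z' z := by
  refine ⟨h.1.symm, fun a b ha hb => ?_⟩
  rcases h.2 b a hb ha with hr | he
  · exact Or.inl (Rel.symm hr)
  · exact Or.inr he.symm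

theorem mot_trans {z₁ z₂ z₃ : PTree P.cells} (h1 : Mot P z₁ z₂) (h2 : Mot P z₂ z₃) :
    Mot P z₁ z₃ := by
  refine ⟨h1.1.trans h2.1, fun a b ha hb => ?_⟩
  have hs : (pcore z₂).isSome := h1.1.mp (by rw [ha]; rfl)
  obtain ⟨c, hc⟩ := Option.isSome_iff_exists.mp hs
  rcases h1.2 a c ha hc with r1 | e1 <;> rcases h2.2 c b hc hb with r2 | e2
  · exact Or.inl (Rel.trans r1 r2)
  · exact Or.inl (e2 ▸ r1)
  · exact Or.inl (e1 ▸ r2)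
  · exact Or.inr (e1.trans e2)

theorem rel_pcore {z z' : PTree P.cells} (h : Rel P z z') : Mot P z z' := by
  refine Rel.rec (motive_1 := fun x _ => True) (motive_2 := fun a b _ => Mot P a b)
    ?_ ?_ ?_ ?_ ?_ ?_ ?_ ?_ ?_ ?_ ?_ ?_ ?_ ?_ ?_ ?_ ?_ ?_ ?_ ?_ ?_ ?_ h
  -- Compat cases (trivial motive)
  · intros; trivial
  · intros; trivial
  · intros; trivial
  -- refl
  · intro x _ _
    exact mot_of_eq rfl
  -- symm
  · intro x y _ M
    exact mot_symm M
  -- trans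
  · intro x y z _ _ M1 M2
    exact mot_trans M1 M2
  -- congr_unit
  · intro k x x' hr _
    refine ⟨by simp, fun a b ha hb => ?_⟩
    simp only [pcore_unit, Option.some_inj] at ha hb
    subst ha; subst hb
    exact Or.inl hr
  -- congr_comp
  · intro i j x x' y y' hxx' hyy' hcz hcz' Mx My _ _
    rcases lt_trichotomy i j with hij | hij | hij
    · constructor
      · simp only [pcore_comp_lt hij, isSome_map']
        exact My.1
      · intro a b ha hb
        rw [pcore_comp_lt hij] at ha hb
        obtain ⟨y₀, hy, rfl⟩ := Option.map_eq_some_iff.mp ha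
        obtain ⟨y₀', hy', rfl⟩ := Option.map_eq_some_iff.mp hb
        have hA := pcore_compat hcz (by rw [pcore_comp_lt hij, hy]; rfl)
        have hB := pcore_compat hcz' (by rw [pcore_comp_lt hij, hy']; rfl)
        refine Or.inl (Rel.congr_comp hxx' ?_ hA.1 hB.1)
        rcases My.2 y₀ y₀' hy hy' with hr | he
        · exact hr
        · subst he; exact Rel.refl (compat_comp_inv hA.1).2.1
    · subst hij
      constructor
      · rw [pcore_comp_eq, pcore_comp_eq, isSome_guard, isSome_guard]
        exact and_congr (by rw [Mx.1]) (by rw [My.1])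
      · intro a b ha hb
        rw [pcore_comp_eq] at ha hb
        by_cases hx : (pcore x).isSome
        · rw [if_pos hx] at ha
          by_cases hx' : (pcore x').isSome
          · rw [if_pos hx'] at hb
            exact My.2 a b ha hb
          · rw [if_neg hx'] at hb; exact absurd hb (by simp)
        · rw [if_neg hx] at ha; exact absurd ha (by simp)
    · constructor
      · simp only [pcore_comp_gt hij, isSome_map']
        exact Mx.1
      · intro a b ha hb
        rw [pcore_comp_gt hij] at ha hb
        obtain ⟨x₀, hx, rfl⟩ := Option.map_eq_some_iff.mp ha
        obtain ⟨x₀', hx', rfl⟩ := Option.map_eq_some_iff.mp hb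
        have hA := pcore_compat hcz (by rw [pcore_comp_gt hij, hx]; rfl)
        have hB := pcore_compat hcz' (by rw [pcore_comp_gt hij, hx']; rfl)
        refine Or.inl (Rel.congr_comp ?_ hyy' hA.1 hB.1)
        rcases Mx.2 x₀ x₀' hx hx' with hr | he
        · exact hr
        · subst he; exact Rel.refl (compat_comp_inv hA.1).1
  -- lam_unit
  · intro i k x y hik hcx hcy hdx hdy hrel _ _ _
    rcases Nat.lt_or_ge i k with hlt | hge
    · constructor
      · rw [pcore_comp_lt hlt, isSome_map']
      · intro a b ha hb
        rw [pcore_comp_lt hlt] at ha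
        obtain ⟨y₀, hy, rfl⟩ := Option.map_eq_some_iff.mp ha
        rw [hy] at hb
        obtain rfl : y₀ = b := Option.some_inj.mp hb
        obtain ⟨hcb, hdb⟩ := pcore_compat hcy hy
        refine Or.inl (Rel.lam_unit (by omega) hcx hcb hdx (by omega) ?_)
        have e : k - i + 1 = ((k - 1) - i + 1) + 1 := by omega
        rw [e, pcore_tgtIter hy] at hrel
        exact hrel
    · have : i = k := le_antisymm hik hge
      subst this
      apply mot_of_eq
      rw [pcore_comp_eq]
      simp
  -- rho_unit
  · intro k i x y hik hcx hcy hdx hdy hrel _ _ _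
    rcases Nat.lt_or_ge i k with hlt | hge
    · constructor
      · rw [pcore_comp_gt hlt, isSome_map']
      · intro a b ha hb
        rw [pcore_comp_gt hlt] at ha
        obtain ⟨x₀, hx, rfl⟩ := Option.map_eq_some_iff.mp ha
        rw [hx] at hb
        obtain rfl : x₀ = b := Option.some_inj.mp hb
        obtain ⟨hcb, hdb⟩ := pcore_compat hcx hx
        refine Or.inl (Rel.rho_unit (by omega) hcb hcy (by omega) hdy ?_)
        have e : k - i + 1 = ((k - 1) - i + 1) + 1 := by omega
        rw [e, pcore_srcIter hx] at hrel
        exact hrel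
    · have : i = k := le_antisymm hik hge
      subst this
      constructor
      · rw [pcore_comp_eq]
        rw [isSome_guard]
        simp
      · intro a b ha hb
        rw [pcore_comp_eq] at ha
        by_cases hx : (pcore x).isSome
        · rw [if_pos hx] at ha
          simp only [pcore_unit, Option.some_inj] at ha
          subst ha
          obtain rfl : P.srcT x = b := by
            obtain ⟨c, hc⟩ := Option.isSome_iff_exists.mp hx
            rw [hc] at hb
            obtain rfl : c = b := Option.some_inj.mp hb
            exact (pcore_src_tgt hc).1
          simp only [Nat.sub_self, Nat.zero_add, srcIter_one] at hrel
          exact Or.inl (Rel.symm hrel)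
        · rw [if_neg hx] at ha; exact absurd ha (by simp)
  -- rho_push
  · intro i k x y hik hcx hcy hdx hdy hrel _ _ _
    apply mot_of_eq
    rw [pcore_comp_lt hik]
    simp
  -- lam_push
  · intro k i x y hik hcx hcy hdx hdy hrel _ _ _
    apply mot_of_eq
    rw [pcore_comp_gt hik]
    simp
  -- assoc_kkk
  · intro k x y w hcx hcy hcw hdx hdy hdw h1 h2 _ _ _ _ _
    apply mot_of_eq
    rw [pcore_comp_eq, pcore_comp_eq, pcore_comp_eq, pcore_comp_eq]
    by_cases hx : (pcore x).isSome <;> by_cases hy : (pcore y).isSome <;>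
      simp [hx, hy, isSome_guard]
  -- assoc_iik
  · intro i k x y w hik hcx hcy hcw hdx hdy hdw h1 h2 _ _ _ _ _
    constructor
    · simp only [pcore_comp_lt hik, isSome_map']
    · intro a b ha hb
      rw [pcore_comp_lt hik] at ha hb
      obtain ⟨w₀, hw, rfl⟩ := Option.map_eq_some_iff.mp ha
      rw [pcore_comp_lt hik, Option.map_map] at hb
      obtain ⟨w₀', hw', rfl⟩ := Option.map_eq_some_iff.mp hb
      rw [hw] at hw'
      obtain rfl : w₀ = w₀' := Option.some_inj.mp hw'
      obtain ⟨hcw₀, hdw₀⟩ := pcore_compat hcw hw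
      left
      show Rel P (PTree.comp i (k-1) (PTree.comp i i x y) w₀)
        (PTree.comp i (k-1) x (PTree.comp i (k-1) y w₀))
      rcases Nat.lt_or_ge i (k-1) with hlt | hge
      · refine Rel.assoc_iik hlt hcx hcy hcw₀ hdx hdy (by omega) h1 ?_
        have e : k - i + 1 = ((k - 1) - i + 1) + 1 := by omega
        rw [e, pcore_tgtIter hw] at h2
        exact h2
      · have ek : k - 1 = i := by omega
        rw [ek]
        refine Rel.assoc_kkk hcx hcy hcw₀ hdx hdy (by omega) h1 ?_
        have e : k - i + 1 = 1 + 1 := by omega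
        rw [e, pcore_tgtIter hw, tgtIter_one] at h2
        exact h2
  -- assoc_iki
  · intro i k x y w hik hcx hcy hcw hdx hdy hdw h1 h2 _ _ _ _ _
    constructor
    · simp only [pcore_comp_lt hik, pcore_comp_gt hik, isSome_map']
    · intro a b ha hb
      rw [pcore_comp_gt hik, pcore_comp_lt hik, Option.map_map] at ha
      rw [pcore_comp_lt hik, pcore_comp_gt hik, Option.map_map] at hb
      obtain ⟨y₀, hy, rfl⟩ := Option.map_eq_some_iff.mp ha
      obtain ⟨y₀', hy', rfl⟩ := Option.map_eq_some_iff.mp hb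
      rw [hy] at hy'
      obtain rfl : y₀ = y₀' := Option.some_inj.mp hy'
      obtain ⟨hcy₀, hdy₀⟩ := pcore_compat hcy hy
      left
      show Rel P (PTree.comp (k-1) i (PTree.comp i (k-1) x y₀) w)
        (PTree.comp i (k-1) x (PTree.comp (k-1) i y₀ w))
      rcases Nat.lt_or_ge i (k-1) with hlt | hge
      · refine Rel.assoc_iki hlt hcx hcy₀ hcw hdx (by omega) hdw ?_ ?_
        · have e : k - i + 1 = ((k - 1) - i + 1) + 1 := by omega
          rw [e, pcore_tgtIter hy] at h1
          exact h1
        · have e : k - i + 1 = ((k - 1) - i + 1) + 1 := by omega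
          rw [e, pcore_srcIter hy] at h2
          exact h2
      · have ek : k - 1 = i := by omega
        rw [ek]
        refine Rel.assoc_kkk hcx hcy₀ hcw hdx (by omega) hdw ?_ ?_
        · have e : k - i + 1 = 1 + 1 := by omega
          rw [e, pcore_tgtIter hy, tgtIter_one] at h1
          exact h1
        · have e : k - i + 1 = 1 + 1 := by omega
          rw [e, pcore_srcIter hy, srcIter_one] at h2
          exact h2
  -- assoc_kii
  · intro i k x y w hik hcx hcy hcw hdx hdy hdw h1 h2 _ _ _ _ _
    constructor
    · simp only [pcore_comp_gt hik, isSome_map']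
    · intro a b ha hb
      rw [pcore_comp_gt hik, pcore_comp_gt hik, Option.map_map] at ha
      rw [pcore_comp_gt hik] at hb
      obtain ⟨x₀, hx, rfl⟩ := Option.map_eq_some_iff.mp ha
      obtain ⟨x₀', hx', rfl⟩ := Option.map_eq_some_iff.mp hb
      rw [hx] at hx'
      obtain rfl : x₀ = x₀' := Option.some_inj.mp hx'
      obtain ⟨hcx₀, hdx₀⟩ := pcore_compat hcx hx
      left
      show Rel P (PTree.comp (k-1) i (PTree.comp (k-1) i x₀ y) w)
        (PTree.comp (k-1) i x₀ (PTree.comp i i y w))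
      rcases Nat.lt_or_ge i (k-1) with hlt | hge
      · refine Rel.assoc_kii hlt hcx₀ hcy hcw (by omega) hdy hdw ?_ h2
        have e : k - i + 1 = ((k - 1) - i + 1) + 1 := by omega
        rw [e, pcore_srcIter hx] at h1
        exact h1
      · have ek : k - 1 = i := by omega
        rw [ek]
        refine Rel.assoc_kkk hcx₀ hcy hcw (by omega) hdy hdw ?_ h2
        have e : k - i + 1 = 1 + 1 := by omega
        rw [e, pcore_srcIter hx, srcIter_one] at h1
        exact h1
  -- assoc_ikk
  · intro i k x y w hik hcx hcy hcw hdx hdy hdw h1 h2 _ _ _ _ _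
    apply mot_of_eq
    rw [pcore_comp_lt hik, pcore_comp_eq, pcore_comp_eq, pcore_comp_lt hik,
      pcore_comp_lt hik]
    by_cases hy : (pcore y).isSome <;> rcases hw : pcore w with _ | w₀ <;>
      simp [hy, hw, isSome_map']
  -- assoc_kki
  · intro i k x y w hik hcx hcy hcw hdx hdy hdw h1 h2 _ _ _ _ _
    apply mot_of_eq
    rw [pcore_comp_gt hik, pcore_comp_eq, pcore_comp_eq, pcore_comp_gt hik,
      pcore_comp_gt hik]
    by_cases hx : (pcore x).isSome <;> rcases hy : pcore y with _ | y₀ <;>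
      simp [hx, hy, isSome_map']
  -- assoc_ijk
  · intro i j k x y w hij hjk hcx hcy hcw hdx hdy hdw h1 h2 _ _ _ _ _
    have hik : i < k := hij.trans hjk
    constructor
    · simp only [pcore_comp_lt hik, pcore_comp_lt hjk, isSome_map']
    · intro a b ha hb
      rw [pcore_comp_lt hik, pcore_comp_lt hjk, Option.map_map] at ha
      rw [pcore_comp_lt hjk, pcore_comp_lt hik, Option.map_map] at hb
      obtain ⟨w₀, hw, rfl⟩ := Option.map_eq_some_iff.mp ha
      obtain ⟨w₀', hw', rfl⟩ := Option.map_eq_some_iff.mp hb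
      rw [hw] at hw'
      obtain rfl : w₀ = w₀' := Option.some_inj.mp hw'
      obtain ⟨hcw₀, hdw₀⟩ := pcore_compat hcw hw
      left
      show Rel P (PTree.comp i (k-1) x (PTree.comp j (k-1) y w₀))
        (PTree.comp j (k-1) (PTree.comp i j x y) (PTree.comp i (k-1) x w₀))
      rcases Nat.lt_or_ge j (k-1) with hlt | hge
      · refine Rel.assoc_ijk hij hlt hcx hcy hcw₀ hdx hdy (by omega) h1 ?_
        have e : k - j + 1 = ((k - 1) - j + 1) + 1 := by omega
        rw [e, pcore_tgtIter hw] at h2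
        exact h2
      · have ek : k - 1 = j := by omega
        rw [ek]
        refine Rel.assoc_ikk hij hcx hcy hcw₀ hdx hdy (by omega) ?_ ?_
        · have e : j - i + 1 = j - i + 1 := rfl
          exact h1
        · have e : k - j + 1 = 1 + 1 := by omega
          rw [e, pcore_tgtIter hw, tgtIter_one] at h2
          exact h2
  -- assoc_ikj
  · intro i j k x y w hij hjk hcx hcy hcw hdx hdy hdw h1 h2 _ _ _ _ _
    have hik : i < k := hij.trans hjk
    constructor
    · simp only [pcore_comp_lt hik, pcore_comp_gt hjk, isSome_map']
    · intro a b ha hb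
      rw [pcore_comp_lt hik, pcore_comp_gt hjk, Option.map_map] at ha
      rw [pcore_comp_gt hjk, pcore_comp_lt hik, Option.map_map] at hb
      obtain ⟨y₀, hy, rfl⟩ := Option.map_eq_some_iff.mp ha
      obtain ⟨y₀', hy', rfl⟩ := Option.map_eq_some_iff.mp hb
      rw [hy] at hy'
      obtain rfl : y₀ = y₀' := Option.some_inj.mp hy'
      obtain ⟨hcy₀, hdy₀⟩ := pcore_compat hcy hy
      left
      show Rel P (PTree.comp i (k-1) x (PTree.comp (k-1) j y₀ w))
        (PTree.comp (k-1) j (PTree.comp i (k-1) x y₀) (PTree.comp i j x w))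
      rcases Nat.lt_or_ge j (k-1) with hlt | hge
      · refine Rel.assoc_ikj hij hlt hcx hcy₀ hcw hdx (by omega) hdw ?_ ?_
        · have e : k - i + 1 = ((k - 1) - i + 1) + 1 := by omega
          rw [e, pcore_tgtIter hy] at h1
          exact h1
        · have e : k - j + 1 = ((k - 1) - j + 1) + 1 := by omega
          rw [e, pcore_srcIter hy] at h2
          exact h2
      · have ek : k - 1 = j := by omega
        rw [ek]
        refine Rel.assoc_ikk hij hcx hcy₀ hcw hdx (by omega) hdw ?_ ?_
        · have e : k - i + 1 = (j - i + 1) + 1 := by omega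
          rw [e, pcore_tgtIter hy] at h1
          exact h1
        · have e : k - j + 1 = 1 + 1 := by omega
          rw [e, pcore_srcIter hy, srcIter_one] at h2
          exact h2
  -- assoc_jki
  · intro i j k x y w hij hjk hcx hcy hcw hdx hdy hdw h1 h2 _ _ _ _ _
    have hik : i < k := hij.trans hjk
    constructor
    · simp only [pcore_comp_gt hik, pcore_comp_lt hjk, isSome_map']
    · intro a b ha hb
      rw [pcore_comp_gt hik, pcore_comp_lt hjk, Option.map_map] at ha
      rw [pcore_comp_lt hjk, pcore_comp_gt hik, Option.map_map] at hb
      obtain ⟨y₀, hy, rfl⟩ := Option.map_eq_some_iff.mp ha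
      obtain ⟨y₀', hy', rfl⟩ := Option.map_eq_some_iff.mp hb
      rw [hy] at hy'
      obtain rfl : y₀ = y₀' := Option.some_inj.mp hy'
      obtain ⟨hcy₀, hdy₀⟩ := pcore_compat hcy hy
      left
      show Rel P (PTree.comp (k-1) i (PTree.comp j (k-1) x y₀) w)
        (PTree.comp j (k-1) (PTree.comp j i x w) (PTree.comp (k-1) i y₀ w))
      rcases Nat.lt_or_ge j (k-1) with hlt | hge
      · refine Rel.assoc_jki hij hlt hcx hcy₀ hcw hdx (by omega) hdw ?_ ?_
        · have e : k - j + 1 = ((k - 1) - j + 1) + 1 := by omega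
          rw [e, pcore_tgtIter hy] at h1
          exact h1
        · have e : k - i + 1 = ((k - 1) - i + 1) + 1 := by omega
          rw [e, pcore_srcIter hy] at h2
          exact h2
      · have ek : k - 1 = j := by omega
        rw [ek]
        refine Rel.assoc_kki hij hcx hcy₀ hcw hdx (by omega) hdw ?_ ?_
        · have e : k - j + 1 = 1 + 1 := by omega
          rw [e, pcore_tgtIter hy, tgtIter_one] at h1
          exact h1
        · have e : k - i + 1 = (j - i + 1) + 1 := by omega
          rw [e, pcore_srcIter hy] at h2
          exact h2
  -- assoc_kji
  · intro i j k x y w hij hjk hcx hcy hcw hdx hdy hdw h1 h2 _ _ _ _ _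
    have hik : i < k := hij.trans hjk
    constructor
    · simp only [pcore_comp_gt hik, pcore_comp_gt hjk, isSome_map']
    · intro a b ha hb
      rw [pcore_comp_gt hik, pcore_comp_gt hjk, Option.map_map] at ha
      rw [pcore_comp_gt hjk, pcore_comp_gt hik, Option.map_map] at hb
      obtain ⟨x₀, hx, rfl⟩ := Option.map_eq_some_iff.mp ha
      obtain ⟨x₀', hx', rfl⟩ := Option.map_eq_some_iff.mp hb
      rw [hx] at hx'
      obtain rfl : x₀ = x₀' := Option.some_inj.mp hx'
      obtain ⟨hcx₀, hdx₀⟩ := pcore_compat hcx hx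
      left
      show Rel P (PTree.comp (k-1) i (PTree.comp (k-1) j x₀ y) w)
        (PTree.comp (k-1) j (PTree.comp (k-1) i x₀ w) (PTree.comp j i y w))
      rcases Nat.lt_or_ge j (k-1) with hlt | hge
      · refine Rel.assoc_kji hij hlt hcx₀ hcy hcw (by omega) hdy hdw ?_ h2
        have e : k - j + 1 = ((k - 1) - j + 1) + 1 := by omega
        rw [e, pcore_srcIter hx] at h1
        exact h1
      · have ek : k - 1 = j := by omega
        rw [ek]
        refine Rel.assoc_kki hij hcx₀ hcy hcw (by omega) hdy hdw ?_ h2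
        have e : k - j + 1 = 1 + 1 := by omega
        rw [e, pcore_srcIter hx, srcIter_one] at h1
        exact h1

/-- Units reflect `≗`. -/
theorem strip_rel {m : ℕ} {a b : PTree P.cells}
    (h : Rel P (.unit m a) (.unit m b)) (ha : Compat P a) (hb : Compat P b) :
    Rel P a b := by
  rcases (rel_pcore h).2 a b rfl rfl with hr | he
  · exact hr
  · subst he; exact Rel.refl ha

end Sesq

namespace Sesq

open PTree

variable {P : Precomputad}

theorem main_aux :
    ∀ (x x' : PTree P.cells), NF x → NF x' → Compat P x → Compat P x' →
      Rel P x x' → dimT P.dim x = dimT P.dim x' → cdim P.dim x = cdim P.dim x' →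
      Rel P (stripUnits x) (stripUnits x') := by
  have nonunit : ∀ (z : PTree P.cells), NF z → Compat P z → notUnitRoot z →
      cdim P.dim z = dimT P.dim z := by
    intro z hn hc hnu
    exact (dimT_eq_cdim_of_unitFree hc ((nf_unitFree z).1 hn hnu)).symm
  intro x
  induction x with
  | unit i a ih =>
      intro x' hnx hnx' hc hc' h hd hcd
      obtain ⟨hca, hia⟩ := compat_unit_inv hc
      have hlt : cdim P.dim (PTree.unit i a) < dimT P.dim (PTree.unit i a) := by
        have h1 : cdim P.dim a ≤ dimT P.dim a := cdim_le_dimT hca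
        show cdim P.dim a < i
        omega
      cases x' with
      | leaf c =>
          exfalso
          have : cdim P.dim (PTree.leaf c) = dimT P.dim (PTree.leaf c) :=
            nonunit _ hnx' hc' (notUnitRoot_leaf c)
          omega
      | comp i' j' u v =>
          exfalso
          have : cdim P.dim (PTree.comp i' j' u v) = dimT P.dim (PTree.comp i' j' u v) :=
            nonunit _ hnx' hc' (notUnitRoot_comp i' j' u v)
          omega
      | unit i' b =>
          obtain ⟨hcb, hib⟩ := compat_unit_inv hc'
          have hii : i' = i := by
            have : dimT P.dim (PTree.unit i a) = i := rfl
            have : dimT P.dim (PTree.unit i' b) = i' := rfl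
            omega
          subst hii
          have hrel : Rel P a b := strip_rel h hca hcb
          show Rel P (stripUnits a) (stripUnits b)
          exact ih b (nf_unit_inv hnx) (nf_unit_inv hnx') hca hcb hrel (by omega)
            (by simpa using hcd)
  | leaf c =>
      intro x' hnx hnx' hc hc' h hd hcd
      have hz : cdim P.dim (PTree.leaf c) = dimT P.dim (PTree.leaf c) := by simp [dimT]
      cases x' with
      | leaf c' => exact h
      | comp i' j' u v => exact h
      | unit i' b =>
          exfalso
          obtain ⟨hcb, hib⟩ := compat_unit_inv hc'
          have h1 : cdim P.dim b ≤ dimT P.dim b := cdim_le_dimT hcb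
          have h2 : cdim P.dim (PTree.unit i' b) = cdim P.dim b := rfl
          have h3 : dimT P.dim (PTree.unit i' b) = i' := rfl
          omega
  | comp i j u v ihu ihv =>
      intro x' hnx hnx' hc hc' h hd hcd
      have hz : cdim P.dim (PTree.comp i j u v) = dimT P.dim (PTree.comp i j u v) :=
        nonunit _ hnx hc (notUnitRoot_comp i j u v)
      cases x' with
      | leaf c' => exact h
      | comp i' j' u' v' => exact h
      | unit i' b =>
          exfalso
          obtain ⟨hcb, hib⟩ := compat_unit_inv hc'
          have h1 : cdim P.dim b ≤ dimT P.dim b := cdim_le_dimT hcb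
          have h2 : cdim P.dim (PTree.unit i' b) = cdim P.dim b := rfl
          have h3 : dimT P.dim (PTree.unit i' b) = i' := rfl
          omega

end Sesq

namespace Sesq

/-- Decomposition of normal forms: `≗`-equivalent `k`-dimensional
normal forms `x, x̃` with common cell dimension `cd` decompose as unit chains
`x = (x₀ → u_{cd+1} → ⋯ → u_k)`, `x̃ = (x̃₀ → u_{cd+1} → ⋯ → u_k)` with `x₀, x̃₀`
unit-free normal forms satisfying `x₀ ≗ x̃₀`. -/
theorem normalForm_unit_decomposition {n : ℕ} (C : Computad n) (k cd : ℕ)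
    (x x' : PTree C.cells)
    (hx : Compat C.toPrecomputad x) (hx' : Compat C.toPrecomputad x')
    (hnx : NF x) (hnx' : NF x') (h : Rel C.toPrecomputad x x')
    (hk : PTree.dimT C.dim x = k) (hk' : PTree.dimT C.dim x' = k)
    (hcd : PTree.cdim C.dim x = cd) (hcd' : PTree.cdim C.dim x' = cd) :
    ∃ x₀ x₀' : PTree C.cells,
      x = PTree.graftUnits x₀ cd k ∧ x' = PTree.graftUnits x₀' cd k ∧
      NF x₀ ∧ NF x₀' ∧ PTree.UnitFree x₀ ∧ PTree.UnitFree x₀' ∧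
      Rel C.toPrecomputad x₀ x₀' := by
  obtain ⟨he, hn0, hf0, hc0, hcd0⟩ := nf_decomp x hnx hx
  obtain ⟨he', hn0', hf0', hc0', hcd0'⟩ := nf_decomp x' hnx' hx'
  refine ⟨PTree.stripUnits x, PTree.stripUnits x', ?_, ?_, hn0, hn0', hf0, hf0', ?_⟩
  · rw [← hk, ← hcd]; exact he
  · rw [← hk', ← hcd']; exact he'
  · exact main_aux x x' hnx hnx' hx hx' h (by omega) (by omega)

end Sesq
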